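/- Consider the Lie algebra of ℂ-linear derivations of the polynomial ring R = ℂ[x₁₁, x₁₂, x₂₁, x₂₂] under the commutator bracket, and let 𝒮 be the set of derivations of the following five forms: (i) a·(x₁₂·∂/∂x₁₂ − x₂₁·∂/∂x₂₁) with a ∈ ℂ[x₁₁, x₂₂, x₁₂x₂₁]; (ii) β·(−x₁₂·∂/∂x₁₁ + (x₁₁ − x₂₂)·∂/∂x₂₁ + x₁₂·∂/∂x₂₂) with β ∈ ℂ[x₁₂, x₁₁+x₂₂, x₁₁x₂₂−x₁₂x₂₁]; (iii) x₁₁·α·(x₁₂·∂/∂x₁₁ − (x₁₁ − x₂₂)·∂/∂x₂₁ − x₁₂·∂/∂x₂₂) with α ∈ ℂ[x₁₂, x₁₁+x₂₂, x₁₁x₂₂−x₁₂x₂₁]; (iv) and (v) the derivations obtained from those in (ii) and (iii) by interchanging the variables x₁₂ and x₂₁ everywhere. Then every derivation X = v₁·∂/∂x₁₁ + v₂·∂/∂x₁₂ + v₃·∂/∂x₂₁ + v₄·∂/∂x₂₂ with polynomial coefficients v₁, v₂, v₃, v₄ ∈ R satisfying X(x₁₁ + x₂₂) = 0 and X(x₁₁x₂₂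 − x₁₂x₂₁) = 0 belongs to the Lie subalgebra of derivations of R generated by 𝒮. -/
import Mathlib


open MvPolynomial

noncomputable section

/-- The polynomial ring `ℂ[x₁₁, x₁₂, x₂₁, x₂₂]`, with `X 0 = x₁₁`, `X 1 = x₁₂`, `X 2 = x₂₁`,
`X 3 = x₂₂`. -/
abbrev R4 : Type := MvPolynomial (Fin 4) ℂ

/-- The subalgebra `ℂ[x₁₁, x₂₂, x₁₂x₂₁]`. -/
def A0 : Subalgebra ℂ R4 := Algebra.adjoin ℂ {X 0, X 3, X 1 * X 2}

/-- The subalgebra `ℂ[x₁₂, x₁₁ + x₂₂, x₁₁x₂₂ − x₁₂x₂₁]`. -/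
def A12 : Subalgebra ℂ R4 := Algebra.adjoin ℂ {X 1, X 0 + X 3, X 0 * X 3 - X 1 * X 2}

/-- The subalgebra `ℂ[x₂₁, x₁₁ + x₂₂, x₁₁x₂₂ − x₁₂x₂₁]`. -/
def A21 : Subalgebra ℂ R4 := Algebra.adjoin ℂ {X 2, X 0 + X 3, X 0 * X 3 - X 1 * X 2}

/-- The set `𝒮` of derivations of the five given forms; a derivation is described by the
4-tuple of its values on the variables `x₁₁, x₁₂, x₂₁, x₂₂` (in this order), via
`MvPolynomial.mkDerivation`:
(i)   `a (x₁₂ ∂/∂x₁₂ − x₂₁ ∂/∂x₂₁)`, `a ∈ ℂ[x₁₁, x₂₂, x₁₂x₂₁]`;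
(ii)  `β (−x₁₂ ∂/∂x₁₁ + (x₁₁ − x₂₂) ∂/∂x₂₁ + x₁₂ ∂/∂x₂₂)`, `β ∈ ℂ[x₁₂, tr, det]`;
(iii) `x₁₁ α (x₁₂ ∂/∂x₁₁ − (x₁₁ − x₂₂) ∂/∂x₂₁ − x₁₂ ∂/∂x₂₂)`, `α ∈ ℂ[x₁₂, tr, det]`;
(iv), (v): the forms (ii) and (iii) with `x₁₂` and `x₂₁` interchanged everywhere. -/
def genSet : Set (Derivation ℂ R4 R4) :=
  {D | ∃ a ∈ A0, D = mkDerivation ℂ ![0, a * X 1, -(a * X 2), 0]} ∪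
  {D | ∃ β ∈ A12, D = mkDerivation ℂ ![-(β * X 1), 0, β * (X 0 - X 3), β * X 1]} ∪
  {D | ∃ α ∈ A12, D = mkDerivation ℂ
    ![X 0 * α * X 1, 0, -(X 0 * α * (X 0 - X 3)), -(X 0 * α * X 1)]} ∪
  {D | ∃ β ∈ A21, D = mkDerivation ℂ ![-(β * X 2), β * (X 0 - X 3), 0, β * X 2]} ∪
  {D | ∃ α ∈ A21, D = mkDerivation ℂ
    ![X 0 * α * X 2, -(X 0 * α * (X 0 - X 3)), 0, -(X 0 * α * X 2)]}

namespace SpecProof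

/-- The subalgebra generated by trace and determinant. -/
def SD : Subalgebra ℂ R4 := Algebra.adjoin ℂ {X 0 + X 3, X 0 * X 3 - X 1 * X 2}

abbrev TT : LieSubalgebra ℂ (Derivation ℂ R4 R4) :=
  LieSubalgebra.lieSpan ℂ (Derivation ℂ R4 R4) genSet

def Evf : R4 →ₗ[ℂ] (Fin 4 → R4) where
  toFun p := ![0, p * X 1, -(p * X 2), 0]
  map_add' p q := by
    funext i; fin_cases i <;> simp <;> ring
  map_smul' c p := by
    funext i; fin_cases i <;> simp [smul_eq_C_mul] <;> ring

def Fvf : R4 →ₗ[ℂ] (Fin 4 → R4) where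
  toFun r := ![-(r * X 1), 0, r * (X 0 - X 3), r * X 1]
  map_add' p q := by
    funext i; fin_cases i <;> simp <;> ring
  map_smul' c p := by
    funext i; fin_cases i <;> simp [smul_eq_C_mul] <;> ring

def Gvf : R4 →ₗ[ℂ] (Fin 4 → R4) where
  toFun q := ![-(q * X 2), q * (X 0 - X 3), 0, q * X 2]
  map_add' p q := by
    funext i; fin_cases i <;> simp <;> ring
  map_smul' c p := by
    funext i; fin_cases i <;> simp [smul_eq_C_mul] <;> ring

def E : R4 →ₗ[ℂ] Derivation ℂ R4 R4 where
  toFun p := mkDerivation ℂ (Evf p)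
  map_add' p q := derivation_ext fun i => by
    fin_cases i <;>
      simp [Evf, mkDerivation_X, Derivation.add_apply] <;> ring
  map_smul' c p := derivation_ext fun i => by
    fin_cases i <;>
      simp [Evf, mkDerivation_X, smul_eq_C_mul] <;> ring

def F : R4 →ₗ[ℂ] Derivation ℂ R4 R4 where
  toFun p := mkDerivation ℂ (Fvf p)
  map_add' p q := derivation_ext fun i => by
    fin_cases i <;>
      simp [Fvf, mkDerivation_X, Derivation.add_apply] <;> ring
  map_smul' c p := derivation_ext fun i => by
    fin_cases i <;>
      simp [Fvf, mkDerivation_X, smul_eq_C_mul] <;> ring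

def G : R4 →ₗ[ℂ] Derivation ℂ R4 R4 where
  toFun p := mkDerivation ℂ (Gvf p)
  map_add' p q := derivation_ext fun i => by
    fin_cases i <;>
      simp [Gvf, mkDerivation_X, Derivation.add_apply] <;> ring
  map_smul' c p := derivation_ext fun i => by
    fin_cases i <;>
      simp [Gvf, mkDerivation_X, smul_eq_C_mul] <;> ring


@[simp] lemma E_X0 (a : R4) : E a (X 0) = 0 := by
  simp [E, Evf, mkDerivation_X]
@[simp] lemma E_X1 (a : R4) : E a (X 1) = a * X 1 := by
  simp [E, Evf, mkDerivation_X]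
@[simp] lemma E_X2 (a : R4) : E a (X 2) = -(a * X 2) := by
  simp [E, Evf, mkDerivation_X]
@[simp] lemma E_X3 (a : R4) : E a (X 3) = 0 := by
  simp [E, Evf, mkDerivation_X]

@[simp] lemma F_X0 (r : R4) : F r (X 0) = -(r * X 1) := by
  simp [F, Fvf, mkDerivation_X]
@[simp] lemma F_X1 (r : R4) : F r (X 1) = 0 := by
  simp [F, Fvf, mkDerivation_X]
@[simp] lemma F_X2 (r : R4) : F r (X 2) = r * (X 0 - X 3) := by
  simp [F, Fvf, mkDerivation_X]
@[simp] lemma F_X3 (r : R4) : F r (X 3) = r * X 1 := by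
  simp [F, Fvf, mkDerivation_X]

@[simp] lemma G_X0 (q : R4) : G q (X 0) = -(q * X 2) := by
  simp [G, Gvf, mkDerivation_X]
@[simp] lemma G_X1 (q : R4) : G q (X 1) = q * (X 0 - X 3) := by
  simp [G, Gvf, mkDerivation_X]
@[simp] lemma G_X2 (q : R4) : G q (X 2) = 0 := by
  simp [G, Gvf, mkDerivation_X]
@[simp] lemma G_X3 (q : R4) : G q (X 3) = q * X 2 := by
  simp [G, Gvf, mkDerivation_X]

lemma B1 (a r : R4) : ⁅E a, F r⁆ = F (E a r + a * r) - E (F r a) := by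
  apply derivation_ext
  intro i
  fin_cases i <;>
    simp [Derivation.commutator_apply, Derivation.sub_apply, Derivation.leibniz,
      smul_eq_mul] <;> ring

lemma B2 (a q : R4) : ⁅E a, G q⁆ = G (E a q - a * q) - E (G q a) := by
  apply derivation_ext
  intro i
  fin_cases i <;>
    simp [Derivation.commutator_apply, Derivation.sub_apply, Derivation.leibniz,
      smul_eq_mul] <;> ring

lemma B3 (a b : R4) : ⁅E a, E b⁆ = E (E a b - E b a) := by
  apply derivation_ext
  intro i
  fin_cases i <;>
    simp [Derivation.commutator_apply, Derivation.sub_apply, Derivation.leibniz,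
      smul_eq_mul] <;> ring



-- basic membership facts
lemma hX0A0 : (X 0 : R4) ∈ A0 := Algebra.subset_adjoin (by simp)
lemma hX3A0 : (X 3 : R4) ∈ A0 := Algebra.subset_adjoin (by simp)
lemma hX12A0 : (X 1 * X 2 : R4) ∈ A0 := Algebra.subset_adjoin (by simp)
lemma hsA0 : (X 0 + X 3 : R4) ∈ A0 := add_mem hX0A0 hX3A0
lemma hdA0 : (X 0 * X 3 - X 1 * X 2 : R4) ∈ A0 := sub_mem (mul_mem hX0A0 hX3A0) hX12A0

lemma SD_le_A0 : SD ≤ A0 := Algebra.adjoin_le (by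
  intro x hx
  rcases hx with rfl | hx
  · exact hsA0
  · rcases hx with rfl; exact hdA0)

lemma SD_le_A12 : SD ≤ A12 := Algebra.adjoin_le (by
  intro x hx
  rcases hx with rfl | hx
  · exact Algebra.subset_adjoin (by simp)
  · rcases hx with rfl; exact Algebra.subset_adjoin (by simp))

lemma SD_le_A21 : SD ≤ A21 := Algebra.adjoin_le (by
  intro x hx
  rcases hx with rfl | hx
  · exact Algebra.subset_adjoin (by simp)
  · rcases hx with rfl; exact Algebra.subset_adjoin (by simp))

lemma hX1A12 : (X 1 : R4) ∈ A12 := Algebra.subset_adjoin (by simp)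
lemma hX2A21 : (X 2 : R4) ∈ A21 := Algebra.subset_adjoin (by simp)

/-- A derivation killing the trace and determinant kills `SD`. -/
lemma killSD (D : Derivation ℂ R4 R4) (h1 : D (X 0 + X 3) = 0)
    (h2 : D (X 0 * X 3 - X 1 * X 2) = 0) {ρ : R4} (hρ : ρ ∈ SD) : D ρ = 0 := by
  have h : Set.EqOn D (0 : Derivation ℂ R4 R4)
      ({X 0 + X 3, X 0 * X 3 - X 1 * X 2} : Set R4) := by
    intro x hx
    rcases hx with rfl | hx
    · simpa using h1
    · rcases hx with rfl; simpa using h2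
  simpa using Derivation.eqOn_adjoin h hρ

lemma E_SD (a : R4) {ρ : R4} (hρ : ρ ∈ SD) : E a ρ = 0 := by
  refine killSD _ ?_ ?_ hρ
  · simp
  · simp [Derivation.leibniz, smul_eq_mul]; ring

lemma F_SD (r : R4) {ρ : R4} (hρ : ρ ∈ SD) : F r ρ = 0 := by
  refine killSD _ ?_ ?_ hρ
  · simp
  · simp [Derivation.leibniz, smul_eq_mul]; ring

lemma G_SD (q : R4) {ρ : R4} (hρ : ρ ∈ SD) : G q ρ = 0 := by
  refine killSD _ ?_ ?_ hρ
  · simp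
  · simp [Derivation.leibniz, smul_eq_mul]; ring

lemma E_pow1 (a : R4) (m : ℕ) : E a (X 1 ^ m) = (m : ℂ) • (a * X 1 ^ m) := by
  induction m with
  | zero => simp
  | succ k ih =>
    rw [pow_succ, Derivation.leibniz, ih]
    push_cast
    simp only [E_X1, smul_eq_mul, smul_eq_C_mul, map_add, map_natCast, C_1]
    ring

lemma E_pow2 (a : R4) (n : ℕ) : E a (X 2 ^ n) = -((n : ℂ) • (a * X 2 ^ n)) := by
  induction n with
  | zero => simp
  | succ k ih =>
    rw [pow_succ, Derivation.leibniz, ih]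
    push_cast
    simp only [E_X2, smul_eq_mul, smul_eq_C_mul, map_add, map_natCast, C_1]
    ring

lemma Eev1 (a : R4) (m : ℕ) {ρ : R4} (hρ : ρ ∈ SD) :
    E a (X 1 ^ m * ρ) = (m : ℂ) • (a * (X 1 ^ m * ρ)) := by
  rw [Derivation.leibniz, E_SD a hρ, E_pow1]
  simp only [smul_eq_mul, smul_eq_C_mul]
  ring

lemma Eev2 (a : R4) (n : ℕ) {ρ : R4} (hρ : ρ ∈ SD) :
    E a (X 2 ^ n * ρ) = -((n : ℂ) • (a * (X 2 ^ n * ρ))) := by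
  rw [Derivation.leibniz, E_SD a hρ, E_pow2]
  simp only [smul_eq_mul, smul_eq_C_mul]
  ring

lemma Eev12 (a : R4) (m n : ℕ) {ρ : R4} (hρ : ρ ∈ SD) :
    E a (X 1 ^ m * X 2 ^ n * ρ) = ((m : ℂ) - n) • (a * (X 1 ^ m * X 2 ^ n * ρ)) := by
  rw [mul_assoc, Derivation.leibniz, Derivation.leibniz, E_SD a hρ, E_pow1, E_pow2]
  simp only [smul_eq_mul, smul_eq_C_mul, map_sub]
  ring



lemma hE {a : R4} (ha : a ∈ A0) : E a ∈ TT :=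
  LieSubalgebra.subset_lieSpan (by left; left; left; left; exact ⟨a, ha, rfl⟩)

lemma hF {β : R4} (hβ : β ∈ A12) : F β ∈ TT :=
  LieSubalgebra.subset_lieSpan (by left; left; left; right; exact ⟨β, hβ, rfl⟩)

lemma hG {β : R4} (hβ : β ∈ A21) : G β ∈ TT :=
  LieSubalgebra.subset_lieSpan (by left; right; exact ⟨β, hβ, rfl⟩)

lemma hF0 {α : R4} (hα : α ∈ A12) : F (X 0 * α) ∈ TT := by
  have hmem : (mkDerivation ℂ
      ![X 0 * α * X 1, 0, -(X 0 * α * (X 0 - X 3)), -(X 0 * α * X 1)] :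
      Derivation ℂ R4 R4) ∈ TT :=
    LieSubalgebra.subset_lieSpan (by left; left; right; exact ⟨α, hα, rfl⟩)
  have h : (mkDerivation ℂ
      ![X 0 * α * X 1, 0, -(X 0 * α * (X 0 - X 3)), -(X 0 * α * X 1)] :
      Derivation ℂ R4 R4) = F (-(X 0 * α)) :=
    derivation_ext fun i => by
      fin_cases i <;> simp [F, Fvf, mkDerivation_X] <;> ring
  rw [h, map_neg] at hmem
  simpa using neg_mem hmem

lemma hG0 {α : R4} (hα : α ∈ A21) : G (X 0 * α) ∈ TT := by
  have hmem : (mkDerivation ℂ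
      ![X 0 * α * X 2, -(X 0 * α * (X 0 - X 3)), 0, -(X 0 * α * X 2)] :
      Derivation ℂ R4 R4) ∈ TT :=
    LieSubalgebra.subset_lieSpan (by right; exact ⟨α, hα, rfl⟩)
  have h : (mkDerivation ℂ
      ![X 0 * α * X 2, -(X 0 * α * (X 0 - X 3)), 0, -(X 0 * α * X 2)] :
      Derivation ℂ R4 R4) = G (-(X 0 * α)) :=
    derivation_ext fun i => by
      fin_cases i <;> simp [G, Gvf, mkDerivation_X] <;> ring
  rw [h, map_neg] at hmem
  simpa using neg_mem hmem

/-- `E (X1^(k+1) ρ) ∈ TT` for `ρ ∈ ℂ[tr,det]`. -/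
lemma memE_X1 (k : ℕ) {ρ : R4} (hρ : ρ ∈ SD) : E (X 1 ^ (k + 1) * ρ) ∈ TT := by
  have h12 : X 1 ^ k * ρ ∈ A12 := mul_mem (pow_mem hX1A12 k) (SD_le_A12 hρ)
  have hb := B1 (X 0) (X 1 ^ k * ρ)
  rw [Eev1 (X 0) k hρ, F_X0] at hb
  have harg : X 1 ^ k * ρ * X 1 = X 1 ^ (k + 1) * ρ := by rw [pow_succ]; ring
  rw [harg] at hb
  have harg2 : (k : ℂ) • (X 0 * (X 1 ^ k * ρ)) + X 0 * (X 1 ^ k * ρ)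
      = ((k : ℂ) + 1) • (X 0 * (X 1 ^ k * ρ)) := by rw [add_smul, one_smul]
  rw [harg2, map_smul, map_neg] at hb
  have hfin : E (X 1 ^ (k + 1) * ρ)
      = ⁅E (X 0), F (X 1 ^ k * ρ)⁆ - ((k : ℂ) + 1) • F (X 0 * (X 1 ^ k * ρ)) := by
    rw [hb]; abel
  rw [hfin]
  exact sub_mem (TT.lie_mem (hE hX0A0) (hF h12))
    (TT.smul_mem _ (hF0 h12))

/-- `E (X2^(k+1) ρ) ∈ TT` for `ρ ∈ ℂ[tr,det]`. -/
lemma memE_X2 (k : ℕ) {ρ : R4} (hρ : ρ ∈ SD) : E (X 2 ^ (k + 1) * ρ) ∈ TT := by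
  have h21 : X 2 ^ k * ρ ∈ A21 := mul_mem (pow_mem hX2A21 k) (SD_le_A21 hρ)
  have hb := B2 (X 0) (X 2 ^ k * ρ)
  rw [Eev2 (X 0) k hρ, G_X0] at hb
  have harg : X 2 ^ k * ρ * X 2 = X 2 ^ (k + 1) * ρ := by rw [pow_succ]; ring
  rw [harg] at hb
  have harg2 : -((k : ℂ) • (X 0 * (X 2 ^ k * ρ))) - X 0 * (X 2 ^ k * ρ)
      = -(((k : ℂ) + 1) • (X 0 * (X 2 ^ k * ρ))) := by rw [add_smul, one_smul]; abel
  rw [harg2, map_neg, map_smul, map_neg] at hb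
  have hfin : E (X 2 ^ (k + 1) * ρ)
      = ⁅E (X 0), G (X 2 ^ k * ρ)⁆ + ((k : ℂ) + 1) • G (X 0 * (X 2 ^ k * ρ)) := by
    rw [hb]; abel
  rw [hfin]
  exact add_mem (TT.lie_mem (hE hX0A0) (hG h21))
    (TT.smul_mem _ (hG0 h21))



lemma hsSD : (X 0 + X 3 : R4) ∈ SD := Algebra.subset_adjoin (by simp)
lemma hdSD : (X 0 * X 3 - X 1 * X 2 : R4) ∈ SD := Algebra.subset_adjoin (by simp)

lemma E_pow12 (a : R4) (m n : ℕ) :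
    E a (X 1 ^ m * X 2 ^ n) = ((m : ℂ) - n) • (a * (X 1 ^ m * X 2 ^ n)) := by
  rw [Derivation.leibniz, E_pow1, E_pow2]
  simp only [smul_eq_mul, smul_eq_C_mul, map_sub]
  ring

lemma memE_gen1 (m n : ℕ) {ρ : R4} (hρ : ρ ∈ SD) : E (X 1 ^ m * X 2 ^ n * ρ) ∈ TT := by
  rcases m with _ | mk
  · rcases n with _ | nk
    · have h : X 1 ^ 0 * X 2 ^ 0 * ρ = ρ := by simp
      rw [h]; exact hE (SD_le_A0 hρ)
    · have h : X 1 ^ 0 * X 2 ^ (nk + 1) * ρ = X 2 ^ (nk + 1) * ρ := by simp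
      rw [h]; exact memE_X2 nk hρ
  · rcases n with _ | nk
    · have h : X 1 ^ (mk + 1) * X 2 ^ 0 * ρ = X 1 ^ (mk + 1) * ρ := by
        simp
      rw [h]; exact memE_X1 mk hρ
    · set m := mk + 1
      set n := nk + 1
      have hb := B3 (X 1 ^ m * ρ) (X 2 ^ n)
      rw [E_pow2 (X 1 ^ m * ρ) n, Eev1 (X 2 ^ n) m hρ] at hb
      have harg : -((n : ℂ) • (X 1 ^ m * ρ * X 2 ^ n))
          - (m : ℂ) • (X 2 ^ n * (X 1 ^ m * ρ))
          = (-((m : ℂ) + n)) • (X 1 ^ m * X 2 ^ n * ρ) := by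
        simp only [smul_eq_C_mul, map_add, map_neg]; ring
      rw [harg, map_smul] at hb
      have hc : (-((m : ℂ) + n)) ≠ 0 := by
        have h0 : ((m : ℂ) + n) ≠ 0 := by
          rw [← Nat.cast_add]; exact Nat.cast_ne_zero.mpr (by omega)
        exact neg_ne_zero.mpr h0
      have hfin : E (X 1 ^ m * X 2 ^ n * ρ)
          = (-((m : ℂ) + n))⁻¹ • ⁅E (X 1 ^ m * ρ), E (X 2 ^ n)⁆ := by
        rw [hb, inv_smul_smul₀ hc]
      rw [hfin]
      have h2 : E (X 2 ^ n) ∈ TT := by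
        have := memE_X2 nk (one_mem SD)
        rwa [mul_one] at this
      exact TT.smul_mem _ (TT.lie_mem (memE_X1 mk hρ) h2)

lemma memE_gen2 (m n : ℕ) {ρ : R4} (hρ : ρ ∈ SD) :
    E (X 0 * (X 1 ^ m * X 2 ^ n * ρ)) ∈ TT := by
  by_cases hmn : m = n
  · subst hmn
    have h : X 0 * (X 1 ^ m * X 2 ^ m * ρ) = X 0 * ((X 1 * X 2) ^ m * ρ) := by
      rw [mul_pow]
    rw [h]
    exact hE (mul_mem hX0A0 (mul_mem (pow_mem hX12A0 m) (SD_le_A0 hρ)))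
  · have hb := B3 (X 0 * ρ) (X 1 ^ m * X 2 ^ n)
    rw [E_pow12 (X 0 * ρ) m n] at hb
    have hzero : E (X 1 ^ m * X 2 ^ n) (X 0 * ρ) = 0 := by
      rw [Derivation.leibniz, E_SD _ hρ, E_X0]
      simp
    rw [hzero, sub_zero, map_smul] at hb
    have harg : X 0 * ρ * (X 1 ^ m * X 2 ^ n) = X 0 * (X 1 ^ m * X 2 ^ n * ρ) := by
      ring
    rw [harg] at hb
    have hc : ((m : ℂ) - n) ≠ 0 :=
      sub_ne_zero.mpr (fun h => hmn (Nat.cast_injective h))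
    have hfin : E (X 0 * (X 1 ^ m * X 2 ^ n * ρ))
        = ((m : ℂ) - n)⁻¹ • ⁅E (X 0 * ρ), E (X 1 ^ m * X 2 ^ n)⁆ := by
      rw [hb, inv_smul_smul₀ hc]
    rw [hfin]
    have h2 : E (X 1 ^ m * X 2 ^ n) ∈ TT := by
      have := memE_gen1 m n (one_mem SD)
      rwa [mul_one] at this
    exact TT.smul_mem _ (TT.lie_mem (hE (mul_mem hX0A0 (SD_le_A0 hρ))) h2)

def genW : Set R4 := {p | ∃ (m n : ℕ) (ρ : R4), ρ ∈ SD ∧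
  (p = X 1 ^ m * X 2 ^ n * ρ ∨ p = X 0 * (X 1 ^ m * X 2 ^ n * ρ))}

def W : Submodule ℂ R4 := Submodule.span ℂ genW

lemma W_mul_X (i : Fin 4) {p : R4} (hp : p ∈ W) : p * X i ∈ W := by
  induction hp using Submodule.span_induction with
  | mem x hx =>
    obtain ⟨m, n, ρ, hρ, hc | hc⟩ := hx <;> subst hc <;> fin_cases i
    · show X 1 ^ m * X 2 ^ n * ρ * X 0 ∈ W
      have h : X 1 ^ m * X 2 ^ n * ρ * X 0 = X 0 * (X 1 ^ m * X 2 ^ n * ρ) := by ring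
      rw [h]; exact Submodule.subset_span ⟨m, n, ρ, hρ, Or.inr rfl⟩
    · show X 1 ^ m * X 2 ^ n * ρ * X 1 ∈ W
      have h : X 1 ^ m * X 2 ^ n * ρ * X 1 = X 1 ^ (m + 1) * X 2 ^ n * ρ := by
        rw [pow_succ]; ring
      rw [h]; exact Submodule.subset_span ⟨m + 1, n, ρ, hρ, Or.inl rfl⟩
    · show X 1 ^ m * X 2 ^ n * ρ * X 2 ∈ W
      have h : X 1 ^ m * X 2 ^ n * ρ * X 2 = X 1 ^ m * X 2 ^ (n + 1) * ρ := by
        rw [pow_succ]; ring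
      rw [h]; exact Submodule.subset_span ⟨m, n + 1, ρ, hρ, Or.inl rfl⟩
    · show X 1 ^ m * X 2 ^ n * ρ * X 3 ∈ W
      have h : X 1 ^ m * X 2 ^ n * ρ * X 3
          = X 1 ^ m * X 2 ^ n * (ρ * (X 0 + X 3)) - X 0 * (X 1 ^ m * X 2 ^ n * ρ) := by
        ring
      rw [h]
      exact sub_mem (Submodule.subset_span ⟨m, n, _, mul_mem hρ hsSD, Or.inl rfl⟩)
        (Submodule.subset_span ⟨m, n, ρ, hρ, Or.inr rfl⟩)
    · show X 0 * (X 1 ^ m * X 2 ^ n * ρ) * X 0 ∈ W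
      have h : X 0 * (X 1 ^ m * X 2 ^ n * ρ) * X 0
          = X 0 * (X 1 ^ m * X 2 ^ n * (ρ * (X 0 + X 3)))
            - X 1 ^ m * X 2 ^ n * (ρ * (X 0 * X 3 - X 1 * X 2))
            - X 1 ^ (m + 1) * X 2 ^ (n + 1) * ρ := by
        rw [pow_succ, pow_succ]; ring
      rw [h]
      exact sub_mem (sub_mem
        (Submodule.subset_span ⟨m, n, _, mul_mem hρ hsSD, Or.inr rfl⟩)
        (Submodule.subset_span ⟨m, n, _, mul_mem hρ hdSD, Or.inl rfl⟩))
        (Submodule.subset_span ⟨m + 1, n + 1, ρ, hρ, Or.inl rfl⟩)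
    · show X 0 * (X 1 ^ m * X 2 ^ n * ρ) * X 1 ∈ W
      have h : X 0 * (X 1 ^ m * X 2 ^ n * ρ) * X 1
          = X 0 * (X 1 ^ (m + 1) * X 2 ^ n * ρ) := by rw [pow_succ]; ring
      rw [h]; exact Submodule.subset_span ⟨m + 1, n, ρ, hρ, Or.inr rfl⟩
    · show X 0 * (X 1 ^ m * X 2 ^ n * ρ) * X 2 ∈ W
      have h : X 0 * (X 1 ^ m * X 2 ^ n * ρ) * X 2
          = X 0 * (X 1 ^ m * X 2 ^ (n + 1) * ρ) := by rw [pow_succ]; ring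
      rw [h]; exact Submodule.subset_span ⟨m, n + 1, ρ, hρ, Or.inr rfl⟩
    · show X 0 * (X 1 ^ m * X 2 ^ n * ρ) * X 3 ∈ W
      have h : X 0 * (X 1 ^ m * X 2 ^ n * ρ) * X 3
          = X 1 ^ m * X 2 ^ n * (ρ * (X 0 * X 3 - X 1 * X 2))
            + X 1 ^ (m + 1) * X 2 ^ (n + 1) * ρ := by
        rw [pow_succ, pow_succ]; ring
      rw [h]
      exact add_mem (Submodule.subset_span ⟨m, n, _, mul_mem hρ hdSD, Or.inl rfl⟩)
        (Submodule.subset_span ⟨m + 1, n + 1, ρ, hρ, Or.inl rfl⟩)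
  | zero => rw [zero_mul]; exact zero_mem _
  | add x y _ _ hx hy => rw [add_mul]; exact add_mem hx hy
  | smul c x _ hx => rw [smul_mul_assoc]; exact Submodule.smul_mem _ _ hx

lemma W_top (p : R4) : p ∈ W := by
  induction p using MvPolynomial.induction_on with
  | C a =>
    have h1 : (1 : R4) ∈ W :=
      Submodule.subset_span ⟨0, 0, 1, one_mem _, Or.inl (by simp)⟩
    have := W.smul_mem a h1
    rwa [smul_eq_C_mul, mul_one] at this
  | add p q hp hq => exact add_mem hp hq
  | mul_X p i hp => exact W_mul_X i hp

lemma memE_all (p : R4) : E p ∈ TT := by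
  have hW : W ≤ Submodule.comap (E : R4 →ₗ[ℂ] Derivation ℂ R4 R4) TT.toSubmodule := by
    rw [W, Submodule.span_le]
    rintro x ⟨m, n, ρ, hρ, hc | hc⟩ <;> subst hc
    · simpa using memE_gen1 m n hρ
    · simpa using memE_gen2 m n hρ
  simpa using hW (W_top p)

lemma memF_all (p : R4) : F p ∈ TT := by
  have hb := B1 p 1
  rw [Derivation.map_one_eq_zero] at hb
  simp only [zero_add, mul_one] at hb
  have h : F p = ⁅E p, F 1⁆ + E (F 1 p) := by rw [hb]; abel
  rw [h]
  exact add_mem (TT.lie_mem (memE_all p) (hF (one_mem A12))) (memE_all _)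

lemma memG_all (p : R4) : G p ∈ TT := by
  have hb := B2 p 1
  rw [Derivation.map_one_eq_zero] at hb
  simp only [zero_sub, mul_one, map_neg] at hb
  have h : G p = -⁅E p, G 1⁆ - E (G 1 p) := by rw [hb]; abel
  rw [h]
  exact sub_mem (neg_mem (TT.lie_mem (memE_all p) (hG (one_mem A21)))) (memE_all _)


def phi : R4 →ₐ[ℂ] R4 := aeval ![X 0, X 1, X 2, X 0]
def psi : R4 →ₐ[ℂ] R4 := aeval ![X 0, 0, X 2, X 3]

lemma dvd_key (f : Fin 4 → R4) (δ : R4) (h : ∀ i, δ ∣ (X i - f i)) (p : R4) :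
    δ ∣ (p - aeval f p) := by
  induction p using MvPolynomial.induction_on with
  | C a => simp [aeval_C, Algebra.algebraMap_eq_smul_one]
  | add p q hp hq =>
    have h2 : p + q - aeval f (p + q) = (p - aeval f p) + (q - aeval f q) := by
      rw [map_add]; ring
    rw [h2]; exact dvd_add hp hq
  | mul_X p i hp =>
    have h2 : p * X i - aeval f (p * X i)
        = (p - aeval f p) * X i + aeval f p * (X i - f i) := by
      rw [map_mul, aeval_X]; ring
    rw [h2]; exact dvd_add (hp.mul_right _) ((h i).mul_left _)

lemma phi_X0 : phi (X 0) = X 0 := by simp [phi]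
lemma phi_X1 : phi (X 1) = X 1 := by simp [phi]
lemma phi_X2 : phi (X 2) = X 2 := by simp [phi]
lemma phi_X3 : phi (X 3) = X 0 := by simp [phi]
lemma psi_X1 : psi (X 1) = 0 := by simp [psi]
lemma psi_X2 : psi (X 2) = X 2 := by simp [psi]

lemma dvd_phi (p : R4) : (X 3 - X 0 : R4) ∣ (p - phi p) := by
  refine dvd_key _ _ (fun i => ?_) p
  fin_cases i <;> simp [phi]

lemma dvd_psi (p : R4) : (X 1 : R4) ∣ (p - psi p) := by
  refine dvd_key _ _ (fun i => ?_) p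
  fin_cases i <;> simp [psi]

lemma phi_phi (p : R4) : phi (phi p) = phi p := by
  have h : phi.comp phi = phi := by
    apply MvPolynomial.algHom_ext
    intro i
    fin_cases i <;> simp [phi]
  exact DFunLike.congr_fun h p

lemma hX1ne : (X 1 : R4) ≠ 0 := X_ne_zero 1
lemma hX2ne : (X 2 : R4) ≠ 0 := X_ne_zero 2
lemma hX03ne : (X 0 - X 3 : R4) ≠ 0 := by
  intro h
  have h2 := congrArg (aeval (![1, 0, 0, 0] : Fin 4 → ℂ)) h
  simp at h2

end SpecProof

open SpecProof in
/-- Every polynomial vector field `X = v₁ ∂/∂x₁₁ + v₂ ∂/∂x₁₂ + v₃ ∂/∂x₂₁ + v₄ ∂/∂x₂₂`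
annihilating the trace `x₁₁ + x₂₂` and the determinant `x₁₁x₂₂ − x₁₂x₂₁` lies in the Lie
subalgebra of derivations generated by `𝒮`. -/
theorem spectrum_preserving_fields_are_lie_combinations
    (v : Fin 4 → R4)
    (htr : mkDerivation ℂ v (X 0 + X 3) = 0)
    (hdet : mkDerivation ℂ v (X 0 * X 3 - X 1 * X 2) = 0) :
    mkDerivation ℂ v ∈ LieSubalgebra.lieSpan ℂ (Derivation ℂ R4 R4) genSet := by
  simp only [map_add, mkDerivation_X] at htr
  rw [map_sub] at hdet
  simp only [Derivation.leibniz, smul_eq_mul, mkDerivation_X] at hdet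
  -- the basic relation
  have hrel : v 1 * X 2 + v 2 * X 1 + v 0 * (X 0 - X 3) = 0 := by
    linear_combination (-1 : R4) * hdet + X 0 * htr
  -- apply phi
  have hphi1 : phi (v 1) * X 2 + phi (v 2) * X 1 = 0 := by
    have h := congrArg phi hrel
    simp only [map_add, map_mul, map_sub, map_zero, phi_X0, phi_X1, phi_X2, phi_X3] at h
    linear_combination h
  -- apply psi
  have hpsi0 : psi (phi (v 1)) = 0 := by
    have h := congrArg psi hphi1
    simp only [map_add, map_mul, map_zero, psi_X1, psi_X2, mul_zero, add_zero] at h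
    rcases mul_eq_zero.mp h with h' | h'
    · exact h'
    · exact absurd h' hX2ne
  obtain ⟨g, hg⟩ : (X 1 : R4) ∣ phi (v 1) := by
    have := dvd_psi (phi (v 1))
    rwa [hpsi0, sub_zero] at this
  have hgfix : phi g = g := by
    have h := phi_phi (v 1)
    rw [hg, map_mul, phi_X1] at h
    exact mul_left_cancel₀ hX1ne h
  have hphiv2 : phi (v 2) = -(g * X 2) := by
    have h : X 1 * phi (v 2) = X 1 * (-(g * X 2)) := by
      linear_combination hphi1 - X 2 * hg
    exact mul_left_cancel₀ hX1ne h
  obtain ⟨qt, hqt⟩ : (X 3 - X 0 : R4) ∣ (v 1 - X 1 * g) := by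
    have := dvd_phi (v 1)
    rwa [hg] at this
  obtain ⟨rt, hrt⟩ : (X 3 - X 0 : R4) ∣ (v 2 + g * X 2) := by
    have := dvd_phi (v 2)
    rwa [hphiv2, sub_neg_eq_add] at this
  have hv0 : v 0 = qt * X 2 + rt * X 1 := by
    have h : (X 0 - X 3) * (v 0 - (qt * X 2 + rt * X 1)) = 0 := by
      linear_combination hrel - X 2 * hqt - X 1 * hrt
    rcases mul_eq_zero.mp h with h' | h'
    · exact absurd h' hX03ne
    · exact sub_eq_zero.mp h'
  have hfin : mkDerivation ℂ v = E g - G qt - F rt := by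
    apply derivation_ext
    intro i
    fin_cases i
    · show mkDerivation ℂ v (X 0) = (E g - G qt - F rt) (X 0)
      simp only [Derivation.sub_apply, mkDerivation_X, E_X0, G_X0, F_X0]
      linear_combination hv0
    · show mkDerivation ℂ v (X 1) = (E g - G qt - F rt) (X 1)
      simp only [Derivation.sub_apply, mkDerivation_X, E_X1, G_X1, F_X1]
      linear_combination hqt
    · show mkDerivation ℂ v (X 2) = (E g - G qt - F rt) (X 2)
      simp only [Derivation.sub_apply, mkDerivation_X, E_X2, G_X2, F_X2]
      linear_combination hrt
    · show mkDerivation ℂ v (X 3) = (E g - G qt - F rt) (X 3)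
      simp only [Derivation.sub_apply, mkDerivation_X, E_X3, G_X3, F_X3]
      linear_combination htr - hv0
  rw [hfin]
  exact sub_mem (sub_mem (memE_all g) (memG_all qt)) (memF_all rt)
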